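/- Let n be a positive integer and let ℬ_n be the collection of up-step sets of all Dyck paths of length 2n. Then ℬ_n is the collection of bases of a matroid on {1,…,2n}; concretely, ℬ_n is nonempty, and for any A, B ∈ ℬ_n and any a ∈ A \ B there exists b ∈ B \ A such that (A \ {a}) ∪ {b} ∈ ℬ_n. -/
import Mathlib


/-- Height of the path with up-step set `A` after `x` steps: `2·|A ∩ {1,…,x}| − x`. -/
def ht (A : Finset ℕ) (x : ℕ) : ℤ := 2 * (A ∩ Finset.Icc 1 x).card - x

/-- `P` is the up-step set of a Dyck path of length `2n`. -/
def IsDyck (n : ℕ) (P : Finset ℕ) : Prop :=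
  P ⊆ Finset.Icc 1 (2 * n) ∧ P.card = n ∧ ∀ x ≤ 2 * n, 0 ≤ ht P x

lemma ht_insert_erase (A : Finset ℕ) (a b x : ℕ) (haA : a ∈ A) (hbA : b ∉ A)
    (ha1 : 1 ≤ a) (hb1 : 1 ≤ b) :
    ht (insert b (A.erase a)) x
      = ht A x + 2 * (if b ≤ x then 1 else 0) - 2 * (if a ≤ x then 1 else 0) := by
  have herase : (A.erase a) ∩ Finset.Icc 1 x = (A ∩ Finset.Icc 1 x).erase a :=
    Finset.erase_inter a A (Finset.Icc 1 x)
  have hbe : b ∉ (A ∩ Finset.Icc 1 x).erase a := by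
    intro h
    exact hbA (Finset.mem_inter.mp (Finset.mem_of_mem_erase h)).1
  unfold ht
  by_cases hbx : b ≤ x
  · rw [Finset.insert_inter_of_mem (Finset.mem_Icc.mpr ⟨hb1, hbx⟩), herase,
      Finset.card_insert_of_notMem hbe]
    by_cases hax : a ≤ x
    · have haI : a ∈ A ∩ Finset.Icc 1 x :=
        Finset.mem_inter.mpr ⟨haA, Finset.mem_Icc.mpr ⟨ha1, hax⟩⟩
      rw [Finset.card_erase_of_mem haI]
      have : 1 ≤ (A ∩ Finset.Icc 1 x).card := Finset.card_pos.mpr ⟨a, haI⟩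
      simp [hbx, hax]
      push_cast [Nat.cast_sub this]
      ring
    · have haI : a ∉ A ∩ Finset.Icc 1 x := by
        intro h
        exact hax (Finset.mem_Icc.mp (Finset.mem_inter.mp h).2).2
      rw [Finset.erase_eq_of_notMem haI]
      simp [hbx, hax]
      ring
  · rw [Finset.insert_inter_of_notMem (by simp [Finset.mem_Icc, hbx]), herase]
    by_cases hax : a ≤ x
    · have haI : a ∈ A ∩ Finset.Icc 1 x :=
        Finset.mem_inter.mpr ⟨haA, Finset.mem_Icc.mpr ⟨ha1, hax⟩⟩
      rw [Finset.card_erase_of_mem haI]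
      have : 1 ≤ (A ∩ Finset.Icc 1 x).card := Finset.card_pos.mpr ⟨a, haI⟩
      simp [hbx, hax]
      push_cast [Nat.cast_sub this]
      ring
    · have haI : a ∉ A ∩ Finset.Icc 1 x := by
        intro h
        exact hax (Finset.mem_Icc.mp (Finset.mem_inter.mp h).2).2
      rw [Finset.erase_eq_of_notMem haI]
      simp [hbx, hax]

/-- The collection of up-step sets of Dyck paths of length `2n` is the collection of
bases of a matroid: it is nonempty and satisfies the basis exchange axiom. -/
theorem catalan_is_matroid (n : ℕ) (hn : 0 < n) :
    (∃ B : Finset ℕ, IsDyck n B) ∧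
    ∀ A B : Finset ℕ, IsDyck n A → IsDyck n B → ∀ a ∈ A \ B,
      ∃ b ∈ B \ A, IsDyck n (insert b (A.erase a)) := by
  constructor
  · refine ⟨Finset.Icc 1 n, Finset.Icc_subset_Icc le_rfl (by omega), by simp, ?_⟩
    intro x hx
    unfold ht
    have : Finset.Icc 1 n ∩ Finset.Icc 1 x = Finset.Icc 1 (min n x) := by
      ext c; simp only [Finset.mem_inter, Finset.mem_Icc]; omega
    rw [this, Nat.card_Icc]
    omega
  · intro A B hA hB a ha
    rw [Finset.mem_sdiff] at ha
    obtain ⟨haA, haB⟩ := ha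
    have hBA : (B \ A).Nonempty := by
      rw [Finset.sdiff_nonempty]
      intro hsub
      have : B = A := Finset.eq_of_subset_of_card_le hsub (by rw [hA.2.1, hB.2.1])
      exact haB (this ▸ haA)
    set b := (B \ A).min' hBA with hbdef
    have hbmem : b ∈ B \ A := Finset.min'_mem _ _
    rw [Finset.mem_sdiff] at hbmem
    obtain ⟨hbB, hbA⟩ := hbmem
    have ha1 : 1 ≤ a := (Finset.mem_Icc.mp (hA.1 haA)).1
    have hb1 : 1 ≤ b := (Finset.mem_Icc.mp (hB.1 hbB)).1
    have hba : b ≠ a := fun h => haB (h ▸ hbB)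
    refine ⟨b, Finset.mem_sdiff.mpr ⟨hbB, hbA⟩, ?_, ?_, ?_⟩
    · intro c hc
      rcases Finset.mem_insert.mp hc with rfl | hc
      · exact hB.1 hbB
      · exact hA.1 (Finset.mem_of_mem_erase hc)
    · rw [Finset.card_insert_of_notMem (fun h => hbA (Finset.mem_of_mem_erase h)),
        Finset.card_erase_of_mem haA, hA.2.1]
      omega
    · intro x hx
      rw [ht_insert_erase A a b x haA hbA ha1 hb1]
      rcases lt_or_gt_of_ne hba with hlt | hgt
      · have := hA.2.2 x hx
        by_cases hax : a ≤ x <;> by_cases hbx : b ≤ x <;> simp [hax, hbx] <;> omega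
      · -- b > a : need ht A x ≥ 2 on [a, b)
        by_cases hax : a ≤ x
        · by_cases hbx : b ≤ x
          · have := hA.2.2 x hx
            simp [hax, hbx]; omega
          · -- a ≤ x < b
            have hsub : B ∩ Finset.Icc 1 x ⊂ A ∩ Finset.Icc 1 x := by
              constructor
              · intro c hc
                obtain ⟨hcB, hcI⟩ := Finset.mem_inter.mp hc
                refine Finset.mem_inter.mpr ⟨?_, hcI⟩
                by_contra hcA
                have : b ≤ c := Finset.min'_le _ _ (Finset.mem_sdiff.mpr ⟨hcB, hcA⟩)
                have := (Finset.mem_Icc.mp hcI).2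
                omega
              · intro hsub'
                have haI : a ∈ A ∩ Finset.Icc 1 x :=
                  Finset.mem_inter.mpr ⟨haA, Finset.mem_Icc.mpr ⟨ha1, hax⟩⟩
                exact haB (Finset.mem_inter.mp (hsub' haI)).1
            have hcard := Finset.card_lt_card hsub
            have hBx := hB.2.2 x hx
            unfold ht at hBx ⊢
            simp [hax, hbx]
            omega
        · have hbx : ¬ b ≤ x := by omega
          have := hA.2.2 x hx
          simp [hax, hbx]
          omega
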